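/- Let α be a type, n : ℕ, P : Fin n → α → Prop a family of positive rule bodies, and for each i : Fin n a finite family E i : Fin (m i) → α → Prop of negated-part tests. Define the path formula of rule i at x by F i x := P i x ∧ ∀ j, ¬ E i j x. Assume: (H2) for all i and all k < i there exists j such that for every x, P k x implies E i j x; and (H3) for all i, j and every x, E i j x implies that P k x holds for some k < i. Then for every x and every i: F i x holds if and only if P i x holds and P k x fails for every k < i (i.e., the path formula of rule i holds at x exactly when i is the least index whose positive body is satisfied at x). -/
import Mathlib


/-- Path formula of rule `i` at `x`: positive body plus all negated-part tests failing. -/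
def pathF {α : Type*} {n : ℕ} (P : Fin n → α → Prop) {m : Fin n → ℕ}
    (E : ∀ i : Fin n, Fin (m i) → α → Prop) (i : Fin n) (x : α) : Prop :=
  P i x ∧ ∀ j : Fin (m i), ¬ E i j x

/-- Dropping the negated portions of the mutually exclusive path formulas and reading
the positive rules as an ordered decision list preserves the semantics:
the path formula of rule `i` holds at `x` iff `i` is the least index whose
positive body is satisfied at `x`. -/
theorem path_formula_iff_first_positive_rule
    {α : Type*} {n : ℕ} (P : Fin n → α → Prop) {m : Fin n → ℕ}
    (E : ∀ i : Fin n, Fin (m i) → α → Prop)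
    (H2 : ∀ i : Fin n, ∀ k < i, ∃ j : Fin (m i), ∀ x : α, P k x → E i j x)
    (H3 : ∀ (i : Fin n) (j : Fin (m i)) (x : α), E i j x → ∃ k < i, P k x) :
    ∀ (x : α) (i : Fin n),
      pathF P E i x ↔ (P i x ∧ ∀ k < i, ¬ P k x) := by
  intro x i
  constructor
  · rintro ⟨hP, hE⟩
    refine ⟨hP, ?_⟩
    intro k hk hPk
    obtain ⟨j, hj⟩ := H2 i k hk
    exact hE j (hj x hPk)
  · rintro ⟨hP, hmin⟩
    refine ⟨hP, ?_⟩
    intro j hEj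
    obtain ⟨k, hk, hPk⟩ := H3 i j x hEj
    exact hmin k hk hPk
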